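/- For the vector p* ∈ ℝ^d defined by p*_1 = 1, p*_2 = 1/√3, p*_j = √(2/3)/(j−1) for 3 ≤ j ≤ d, one has D_1(p*)² = D_2(p*)² = 2d/3, and D_j(p*)² < 2d/3 for every j ∈ {3,...,d}; in particular D_j(p*) ≤ D_1(p*) for all j ∈ {1,...,d}. -/

import Mathlib

def wvec (d : ℕ) (j : Fin d) : Fin d → ℕ :=
  fun i => if i < j then 0 else if i = j then (j : ℕ) + 1 else (i : ℕ)

noncomputable def G (d : ℕ) (p : Fin d → ℝ) (w : Fin d → ℕ) : ℝ :=
  (∏ i, p i) / (Real.sqrt (∑ i, ((w i : ℝ)) ^ 2 * p i ^ 2)) ^ d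

noncomputable def minG (d : ℕ) (p : Fin d → ℝ) : ℝ :=
  ⨅ j : Fin d, G d p (wvec d j)

noncomputable def D (d : ℕ) (j : Fin d) (p : Fin d → ℝ) : ℝ :=
  Real.sqrt (∑ i, ((wvec d j i : ℝ)) ^ 2 * p i ^ 2)

/-- `p*`: `p*_1 = 1`, `p*_2 = 1/√3`, `p*_j = √(2/3)/(j−1)` for `3 ≤ j ≤ d`
(0-based: index `i` has 1-based position `i+1`, so the denominator `j−1` is `i`). -/
noncomputable def pstar (d : ℕ) : Fin d → ℝ :=
  fun i => if (i : ℕ) = 0 then 1 else if (i : ℕ) = 1 then 1 / Real.sqrt 3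
    else Real.sqrt (2 / 3) / ((i : ℕ) : ℝ)

open Finset

noncomputable def qfun (n : ℕ) : ℝ :=
  if n = 0 then 1 else if n = 1 then 1/3 else (2/3) / (n:ℝ)^2

noncomputable def gfun (jv n : ℕ) : ℝ :=
  if n < jv then 0 else if n = jv then ((jv:ℝ)+1)^2 * qfun n else (n:ℝ)^2 * qfun n

lemma pstar_sq (d : ℕ) (i : Fin d) : (pstar d i)^2 = qfun (i:ℕ) := by
  unfold pstar qfun
  split_ifs with h1 h2
  · norm_num
  · rw [div_pow, one_pow, Real.sq_sqrt] <;> norm_num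
  · rw [div_pow, Real.sq_sqrt] <;> norm_num

lemma term_eq (d : ℕ) (j i : Fin d) :
    ((wvec d j i : ℝ))^2 * (pstar d i)^2 = gfun (j:ℕ) (i:ℕ) := by
  rw [pstar_sq]
  unfold wvec gfun
  simp only [Fin.lt_def, Fin.ext_iff]
  split_ifs with h1 h2 <;> push_cast <;> ring

lemma gfun_tail (jv n : ℕ) (h1 : jv < n) (h2 : 2 ≤ n) : gfun jv n = 2/3 := by
  unfold gfun qfun
  have hn : ((n:ℝ))^2 ≠ 0 := by positivity
  rw [if_neg (by omega), if_neg (by omega), if_neg (by omega), if_neg (by omega)]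
  field_simp

lemma sum_split (a d jv : ℕ) (had : a ≤ d) (hja : jv < a) (h2 : 2 ≤ a) :
    ∑ n ∈ range d, gfun jv n = (∑ n ∈ range a, gfun jv n) + ((d:ℝ) - a) * (2/3) := by
  rw [range_eq_Ico, ← Finset.sum_Ico_consecutive _ (by omega : 0 ≤ a) had,
    ← range_eq_Ico]
  congr 1
  rw [Finset.sum_congr rfl (fun n hn => gfun_tail jv n (by
        simp [Finset.mem_Ico] at hn; omega) (by simp [Finset.mem_Ico] at hn; omega)),
      Finset.sum_const, Nat.card_Ico, nsmul_eq_mul]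
  push_cast [Nat.cast_sub had]
  ring

lemma sum_gfun_zero (d : ℕ) (hd : 2 ≤ d) : ∑ n ∈ range d, gfun 0 n = 2*(d:ℝ)/3 := by
  rw [sum_split 2 d 0 hd (by omega) le_rfl]
  have : ∑ n ∈ range 2, gfun 0 n = 1 + 1/3 := by
    simp [Finset.sum_range_succ, gfun, qfun]
  rw [this]; ring

lemma sum_gfun_one (d : ℕ) (hd : 2 ≤ d) : ∑ n ∈ range d, gfun 1 n = 2*(d:ℝ)/3 := by
  rw [sum_split 2 d 1 hd (by omega) le_rfl]
  have : ∑ n ∈ range 2, gfun 1 n = 4/3 := by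
    simp [Finset.sum_range_succ, gfun, qfun]
    norm_num
  rw [this]; ring

lemma sum_gfun_big (d jv : ℕ) (h2 : 2 ≤ jv) (hjd : jv < d) :
    ∑ n ∈ range d, gfun jv n
      = ((jv:ℝ)+1)^2 * (2/3) / (jv:ℝ)^2 + ((d:ℝ) - jv - 1) * (2/3) := by
  rw [sum_split (jv+1) d jv (by omega) (by omega) (by omega), Finset.sum_range_succ]
  have hz : ∑ n ∈ range jv, gfun jv n = 0 := by
    apply Finset.sum_eq_zero
    intro n hn
    simp only [Finset.mem_range] at hn
    simp [gfun, hn]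
  have hjj : gfun jv jv = ((jv:ℝ)+1)^2 * (2/3) / (jv:ℝ)^2 := by
    unfold gfun qfun
    rw [if_neg (by omega), if_pos rfl, if_neg (by omega), if_neg (by omega)]
    ring
  rw [hz, hjj]
  push_cast
  ring

lemma D_sq_eq (d : ℕ) (j : Fin d) :
    D d j (pstar d) ^ 2 = ∑ n ∈ range d, gfun (j:ℕ) n := by
  unfold D
  rw [Real.sq_sqrt (Finset.sum_nonneg fun i _ => by positivity)]
  rw [Finset.sum_congr rfl (fun i _ => term_eq d j i)]
  exact Fin.sum_univ_eq_sum_range (fun n => gfun (j:ℕ) n) d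

lemma sum_gfun_big_lt (d jv : ℕ) (h2 : 2 ≤ jv) (hjd : jv < d) :
    ∑ n ∈ range d, gfun jv n < 2*(d:ℝ)/3 := by
  have hx2 : (2:ℝ) ≤ (jv:ℝ) := by exact_mod_cast h2
  have hxd : (jv:ℝ) + 1 ≤ (d:ℝ) := by exact_mod_cast hjd
  rw [sum_gfun_big d jv h2 hjd]
  set x : ℝ := (jv : ℝ)
  have hxx : (0:ℝ) < x^2 := by positivity
  have hA : (x+1)^2 * (2/3) / x^2 < (x+1) * (2/3) := by
    rw [div_lt_iff₀ hxx]
    nlinarith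
  linarith

/-- For `p*`: `D_1(p*)² = D_2(p*)² = 2d/3`, `D_j(p*)² < 2d/3` for `j ∈ {3,…,d}`,
and in particular `D_j(p*) ≤ D_1(p*)` for all `j`. -/
theorem stmt11 (d : ℕ) (hd : 2 ≤ d) :
    D d ⟨0, by omega⟩ (pstar d) ^ 2 = 2 * (d : ℝ) / 3 ∧
      D d ⟨1, by omega⟩ (pstar d) ^ 2 = 2 * (d : ℝ) / 3 ∧
      (∀ j : Fin d, 2 ≤ (j : ℕ) → D d j (pstar d) ^ 2 < 2 * (d : ℝ) / 3) ∧
      ∀ j : Fin d, D d j (pstar d) ≤ D d ⟨0, by omega⟩ (pstar d) := by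
  have h0 : D d ⟨0, by omega⟩ (pstar d) ^ 2 = 2 * (d:ℝ) / 3 := by
    rw [D_sq_eq]; exact sum_gfun_zero d hd
  have h1 : D d ⟨1, by omega⟩ (pstar d) ^ 2 = 2 * (d:ℝ) / 3 := by
    rw [D_sq_eq]; exact sum_gfun_one d hd
  have hbig : ∀ j : Fin d, 2 ≤ (j:ℕ) → D d j (pstar d) ^ 2 < 2 * (d:ℝ) / 3 := by
    intro j hj
    rw [D_sq_eq]
    exact sum_gfun_big_lt d (j:ℕ) hj j.isLt
  refine ⟨h0, h1, hbig, fun j => ?_⟩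
  have hle : D d j (pstar d) ^ 2 ≤ D d ⟨0, by omega⟩ (pstar d) ^ 2 := by
    rcases Nat.lt_or_ge (j:ℕ) 2 with hj | hj
    · interval_cases h : (j : ℕ)
      · rw [D_sq_eq, D_sq_eq]
        simp [h]
      · rw [D_sq_eq, D_sq_eq]
        simp only [h]
        rw [sum_gfun_one d hd, sum_gfun_zero d hd]
    · rw [h0]
      exact le_of_lt (hbig j hj)
  have hDnn : 0 ≤ D d j (pstar d) := Real.sqrt_nonneg _
  have hD0nn : 0 ≤ D d ⟨0, by omega⟩ (pstar d) := Real.sqrt_nonneg _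
  nlinarith
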